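/- Let τ > 0, z₀ ∈ ℝ, and let t ∈ ℝ be such that Q(t) := (τ² cosh² t + (τ t + z₀)²)/(2τ cosh t) satisfies 0 < Q(t) ≤ 1, and set λ(t) := 1 − (2/π)·arcsin Q(t). Then for every ϑ ∈ [−π, π]: ‖κ̂(t,ϑ)‖ = 1 if and only if |ϑ| = (π/2)·λ(t). That is, the intersection of the catenoid with the unit sphere ∂B³ is exactly the pair of curves ϑ = ± (π/2)λ(t). -/

import Mathlib

noncomputable section

/-- The catenoid parametrization `κ̂(t,ϑ) = (1 − τ cosh t cos ϑ, τ cosh t sin ϑ, τ t + z₀)`. -/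
def kappaHat (τ z₀ : ℝ) (t ϑ : ℝ) : EuclideanSpace ℝ (Fin 3) :=
  WithLp.toLp 2 ![1 - τ * Real.cosh t * Real.cos ϑ, τ * Real.cosh t * Real.sin ϑ, τ * t + z₀]

/-- `Q(t) = (τ² cosh² t + (τ t + z₀)²)/(2τ cosh t)`. -/
def Qfun (τ z₀ t : ℝ) : ℝ :=
  (τ ^ 2 * Real.cosh t ^ 2 + (τ * t + z₀) ^ 2) / (2 * τ * Real.cosh t)

/-- The height-dependent scaling factor `λ(t) = 1 − (2/π) arcsin Q(t)`. -/
def lambdaFun (τ z₀ t : ℝ) : ℝ := 1 - 2 / Real.pi * Real.arcsin (Qfun τ z₀ t)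

/-- The intersection of the catenoid with the unit sphere `∂B³` is exactly the pair of
curves `ϑ = ± (π/2) λ(t)`: for `ϑ ∈ [−π, π]`, `‖κ̂(t,ϑ)‖ = 1` iff `|ϑ| = (π/2) λ(t)`. -/
theorem kappaHat_meets_unit_sphere (τ z₀ t : ℝ) (hτ : 0 < τ)
    (hQpos : 0 < Qfun τ z₀ t) (hQle : Qfun τ z₀ t ≤ 1) :
    ∀ ϑ ∈ Set.Icc (-Real.pi) Real.pi,
      ‖kappaHat τ z₀ t ϑ‖ = 1 ↔ |ϑ| = Real.pi / 2 * lambdaFun τ z₀ t := by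
  intro ϑ hϑ
  have hc : 0 < Real.cosh t := Real.cosh_pos t
  have ha : 0 < τ * Real.cosh t := mul_pos hτ hc
  set a := τ * Real.cosh t with ha_def
  set h := τ * t + z₀ with hh_def
  have hQ : Qfun τ z₀ t = (a ^ 2 + h ^ 2) / (2 * a) := by
    rw [Qfun, ha_def, hh_def]; ring_nf
  -- norm squared
  have hsq : ‖kappaHat τ z₀ t ϑ‖ ^ 2 = 1 - 2 * a * Real.cos ϑ + a ^ 2 + h ^ 2 := by
    have := Real.sin_sq_add_cos_sq ϑ
    rw [EuclideanSpace.norm_eq, Real.sq_sqrt (by positivity)]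
    simp only [kappaHat, PiLp.toLp_apply, Fin.sum_univ_three, Matrix.cons_val_zero, Matrix.cons_val_one,
      Matrix.head_cons, Matrix.cons_val_two, Matrix.tail_cons, Real.norm_eq_abs, sq_abs]
    rw [ha_def, hh_def]
    nlinarith [this]
  have step1 : ‖kappaHat τ z₀ t ϑ‖ = 1 ↔ Real.cos ϑ = Qfun τ z₀ t := by
    rw [hQ, eq_div_iff (ne_of_gt (by positivity : (0:ℝ) < 2 * a))]
    constructor
    · intro hn
      have : ‖kappaHat τ z₀ t ϑ‖ ^ 2 = 1 := by rw [hn]; norm_num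
      rw [hsq] at this; linarith
    · intro hcos
      have h1 : ‖kappaHat τ z₀ t ϑ‖ ^ 2 = 1 := by rw [hsq]; linarith
      nlinarith [norm_nonneg (kappaHat τ z₀ t ϑ), h1]
  have harc : Real.pi / 2 * lambdaFun τ z₀ t = Real.arccos (Qfun τ z₀ t) := by
    rw [lambdaFun, Real.arccos]
    field_simp
  rw [step1, harc]
  have hQ1 : -1 ≤ Qfun τ z₀ t := by linarith
  constructor
  · intro hcos
    have : Real.cos |ϑ| = Qfun τ z₀ t := by rw [Real.cos_abs]; exact hcos
    rw [← this, Real.arccos_cos (abs_nonneg ϑ) (abs_le.mpr ⟨hϑ.1, hϑ.2⟩)]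
  · intro habs
    have : Real.cos |ϑ| = Qfun τ z₀ t := by
      rw [habs, Real.cos_arccos hQ1 hQle]
    rwa [Real.cos_abs] at this

end
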